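/- (Theorem 2.1, full equivalence) Let μ₀ be a measure on (X, 𝔅). Then μ₀ satisfies ∫ V·(f ∘ r) dμ₀ = ∫ f dμ₀ for all f ∈ L^∞(X, μ₀) if and only if there exists a nonnegative measurable function Δ on X with ∑_{r(y)=x} Δ(y) = 1 for μ₀-a.e. x and ∫ V·f dμ₀ = ∫ ∑_{r(y)=x} Δ(y) f(y) dμ₀(x) for all f ∈ L^∞(X, μ₀). -/

import Mathlib

open MeasureTheory ENNReal

/-- Theorem 2.1, full equivalence: μ₀ has the fixed-point property
∫ V·(f∘r) dμ₀ = ∫ f dμ₀ for all bounded measurable f iff there exists a nonnegative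
measurable Δ with ∑_{r(y)=x} Δ(y) = 1 μ₀-a.e. and
∫ V·f dμ₀ = ∫ ∑_{r(y)=x} Δ(y) f(y) dμ₀(x) for all bounded measurable f. -/
theorem stmt10 {X : Type*} [MeasurableSpace X] (r : X → X) (hr : Measurable r)
    (hsurj : Function.Surjective r) (hfin : ∀ x, (r ⁻¹' {x}).Finite)
    (c : X → ℕ) (hc : ∀ x, c x = Nat.card (r ⁻¹' {x})) (hcm : Measurable c)
    (τ : ℕ → X → X)
    (hτfib : ∀ x, r ⁻¹' {x} = (fun i => τ i x) '' {i | 1 ≤ i ∧ i ≤ c x})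
    (hτinj : ∀ x, Set.InjOn (fun i => τ i x) {i | 1 ≤ i ∧ i ≤ c x})
    (hτmeas : ∀ i, Measurable (({x | i ≤ c x}).restrict (τ i)))
    (hτim : ∀ i, MeasurableSet (τ i '' {x | i ≤ c x}))
    (V : X → ℝ) (hVm : Measurable V) (hVpos : ∀ x, 0 ≤ V x) (hVbdd : ∃ C, ∀ x, V x ≤ C)
    (μ₀ : Measure X) [IsFiniteMeasure μ₀] :
    (∀ f : X → ℝ, Measurable f → (∃ C, ∀ x, |f x| ≤ C) →
        ∫ x, V x * f (r x) ∂μ₀ = ∫ x, f x ∂μ₀) ↔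
    (∃ Δ : X → ℝ, Measurable Δ ∧ (∀ x, 0 ≤ Δ x) ∧
      (∀ᵐ x ∂μ₀, ∑ᶠ y ∈ r ⁻¹' {x}, Δ y = 1) ∧
      (∀ f : X → ℝ, Measurable f → (∃ C, ∀ x, |f x| ≤ C) →
        ∫ x, V x * f x ∂μ₀ = ∫ x, ∑ᶠ y ∈ r ⁻¹' {x}, Δ y * f y ∂μ₀)) := by
  have hIcc : ∀ x : X, {i : ℕ | 1 ≤ i ∧ i ≤ c x} = ↑(Finset.Icc 1 (c x)) := by
    intro x; ext i; simp [Finset.mem_Icc]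
  have hrτ : ∀ x i, 1 ≤ i → i ≤ c x → r (τ i x) = x := by
    intro x i h1 h2
    have : τ i x ∈ r ⁻¹' {x} := by
      rw [hτfib x]; exact ⟨i, ⟨h1, h2⟩, rfl⟩
    simpa using this
  have fibsum : ∀ (g : X → ℝ) (x : X),
      (∑ᶠ y ∈ r ⁻¹' {x}, g y) = ∑ i ∈ Finset.Icc 1 (c x), g (τ i x) := by
    intro g x
    rw [hτfib x, finsum_mem_image (hτinj x), hIcc x, finsum_mem_coe_finset]
  constructor
  · intro H
    obtain ⟨Cv, hCv⟩ := hVbdd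
    -- nonneg, ≤ and measurability preliminaries
    set Ve : X → ℝ≥0∞ := fun x => ENNReal.ofReal (V x) with hVe
    have hVem : Measurable Ve := hVm.ennreal_ofReal
    set ν : Measure X := μ₀.withDensity Ve with hν
    have hνs : ∀ s, MeasurableSet s → ν s = ∫⁻ x in s, Ve x ∂μ₀ := fun s hs =>
      withDensity_apply _ hs
    -- key : pushforward of ν under r is μ₀
    have key : ν.map r = μ₀ := by
      ext B hB
      rw [Measure.map_apply hr hB, hνs _ (hr hB)]
      have h1 := H (B.indicator fun _ => (1:ℝ)) (measurable_const.indicator hB)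
        ⟨1, fun x => by by_cases h : x ∈ B <;> simp [Set.indicator_apply, h]⟩
      simp only [integral_indicator hB, setIntegral_const, smul_eq_mul, mul_one] at h1
      have h2 : (fun x => V x * B.indicator (fun _ => (1:ℝ)) (r x)) = (r ⁻¹' B).indicator V := by
        ext x; by_cases h : r x ∈ B <;> simp [Set.indicator_apply, h]
      rw [h2] at h1
      have h3 : ∫ x, (r ⁻¹' B).indicator V x ∂μ₀ = (∫⁻ x in r ⁻¹' B, Ve x ∂μ₀).toReal := by
        rw [integral_indicator (hr hB),
          integral_eq_lintegral_of_nonneg_ae (Filter.Eventually.of_forall fun x => hVpos x)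
            hVm.aestronglyMeasurable]
      have hfin1 : ∫⁻ x in r ⁻¹' B, Ve x ∂μ₀ ≠ ∞ := by
        refine ne_of_lt (lt_of_le_of_lt (lintegral_mono fun x =>
          ENNReal.ofReal_le_ofReal (hCv x)) ?_)
        rw [lintegral_const]
        exact ENNReal.mul_lt_top ENNReal.ofReal_lt_top (measure_lt_top _ _)
      exact (ENNReal.toReal_eq_toReal_iff' hfin1 (measure_ne_top μ₀ B)).mp (by rw [← h3, h1, measureReal_def])
    -- the sets A i and E i
    have hAm : ∀ i : ℕ, MeasurableSet {x | i ≤ c x} := fun i => hcm measurableSet_Ici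
    set E : ℕ → Set X := fun i => if i = 0 then ∅ else τ i '' {x | i ≤ c x} with hE
    have hEm : ∀ i, MeasurableSet (E i) := by
      intro i
      by_cases h0 : i = 0
      · simp [hE, h0]
      · simpa [hE, h0] using hτim i
    have hmemE : ∀ i y, y ∈ E i → 1 ≤ i ∧ i ≤ c (r y) ∧ τ i (r y) = y := by
      intro i y hy
      by_cases h0 : i = 0
      · simp [hE, h0] at hy
      · simp only [hE, h0, if_false] at hy
        obtain ⟨x, hx, rfl⟩ := hy
        have h1 : 1 ≤ i := Nat.one_le_iff_ne_zero.mpr h0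
        have hrx : r (τ i x) = x := hrτ x i h1 hx
        rw [hrx]
        exact ⟨h1, hx, rfl⟩
    have hτE : ∀ x i, 1 ≤ i → i ≤ c x → τ i x ∈ E i := by
      intro x i h1 h2
      rw [hE]
      simp only [if_neg (by omega : ¬ i = 0)]
      exact ⟨x, h2, rfl⟩
    have hEdisj : Pairwise (Function.onFun Disjoint E) := by
      intro i j hij
      rw [Function.onFun, Set.disjoint_left]
      intro y hyi hyj
      obtain ⟨h1i, h2i, h3i⟩ := hmemE i y hyi
      obtain ⟨h1j, h2j, h3j⟩ := hmemE j y hyj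
      exact hij (hτinj (r y) ⟨h1i, h2i⟩ ⟨h1j, h2j⟩ (h3i.trans h3j.symm))
    have hEcover : ⋃ i, E i = Set.univ := by
      apply Set.eq_univ_of_forall
      intro y
      have hy : y ∈ r ⁻¹' {r y} := rfl
      rw [hτfib (r y)] at hy
      obtain ⟨i, ⟨h1, h2⟩, hyi⟩ := hy
      exact Set.mem_iUnion.mpr ⟨i, by rw [← hyi]; exact hτE (r y) i h1 h2⟩
    -- the measures β i and densities h i
    set β : ℕ → Measure X := fun i => (ν.restrict (E i)).map r with hβ
    have hβs : ∀ i B, MeasurableSet B → β i B = ν (r ⁻¹' B ∩ E i) := by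
      intro i B hB
      rw [hβ]
      simp only
      rw [Measure.map_apply hr hB, Measure.restrict_apply (hr hB)]
    have hβle : ∀ i, β i ≤ μ₀ := by
      intro i
      rw [Measure.le_iff]
      intro B hB
      rw [hβs i B hB, ← key, Measure.map_apply hr hB]
      exact measure_mono Set.inter_subset_left
    have hβfin : ∀ i, IsFiniteMeasure (β i) := fun i => isFiniteMeasure_of_le μ₀ (hβle i)
    have hβac : ∀ i, β i ≪ μ₀ := fun i => Measure.absolutelyContinuous_of_le (hβle i)
    set h : ℕ → X → ℝ≥0∞ := fun i => Measure.rnDeriv (β i) μ₀ with hh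
    have hhm : ∀ i, Measurable (h i) := fun i => Measure.measurable_rnDeriv _ _
    have hwd : ∀ i, μ₀.withDensity (h i) = β i := by
      intro i
      haveI := hβfin i
      exact Measure.withDensity_rnDeriv_eq _ _ (hβac i)
    have hwdB : ∀ i B, MeasurableSet B → ∫⁻ x in B, h i x ∂μ₀ = β i B := by
      intro i B hB
      rw [← withDensity_apply _ hB, hwd i]
    -- countable additivity over E i
    have hνadd : ∀ B, MeasurableSet B → ∑' i, ν (r ⁻¹' B ∩ E i) = ν (r ⁻¹' B) := by
      intro B hB
      have hd : Pairwise (Function.onFun Disjoint fun i => r ⁻¹' B ∩ E i) := fun i j hij =>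
        (hEdisj hij).mono Set.inter_subset_right Set.inter_subset_right
      calc ∑' i, ν (r ⁻¹' B ∩ E i) = ν (⋃ i, r ⁻¹' B ∩ E i) :=
            (measure_iUnion hd fun i => (hr hB).inter (hEm i)).symm
        _ = ν (r ⁻¹' B) := by rw [← Set.inter_iUnion, hEcover, Set.inter_univ]
    have hsum1 : ∀ B, MeasurableSet B → ∫⁻ x in B, ∑' i, h i x ∂μ₀ = μ₀ B := by
      intro B hB
      rw [lintegral_tsum fun i => (hhm i).aemeasurable]
      calc ∑' i, ∫⁻ x in B, h i x ∂μ₀ = ∑' i, ν (r ⁻¹' B ∩ E i) := by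
            refine tsum_congr fun i => ?_
            rw [hwdB i B hB, hβs i B hB]
        _ = ν (r ⁻¹' B) := hνadd B hB
        _ = μ₀ B := by rw [← Measure.map_apply hr hB, key]
    have hG1 : (fun x => ∑' i, h i x) =ᵐ[μ₀] fun _ => 1 := by
      refine ae_eq_of_forall_setLIntegral_eq_of_sigmaFinite
        (Measurable.ennreal_tsum hhm) measurable_const fun s hs _ => ?_
      rw [hsum1 s hs]
      simp
    have hzero : ∀ i : ℕ, ∀ᵐ x ∂μ₀, i = 0 ∨ c x < i → h i x = 0 := by
      intro i
      have hSm : MeasurableSet {x | i = 0 ∨ c x < i} := by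
        rcases Nat.eq_zero_or_pos i with h0 | h0
        · have : {x : X | i = 0 ∨ c x < i} = Set.univ := by
            ext x; simp [h0]
          rw [this]; exact MeasurableSet.univ
        · have : {x : X | i = 0 ∨ c x < i} = {x | c x < i} := by
            ext x; simp [Nat.pos_iff_ne_zero.mp h0]
          rw [this]; exact hcm measurableSet_Iio
      have hint0 : ∫⁻ x in {x | i = 0 ∨ c x < i}, h i x ∂μ₀ = 0 := by
        rw [hwdB i _ hSm, hβs i _ hSm]
        have hemp : r ⁻¹' {x | i = 0 ∨ c x < i} ∩ E i = ∅ := by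
          ext y
          simp only [Set.mem_inter_iff, Set.mem_preimage, Set.mem_setOf_eq,
            Set.mem_empty_iff_false, iff_false, not_and]
          intro hyS hyE
          obtain ⟨h1, h2, _⟩ := hmemE i y hyE
          rcases hyS with h0 | hlt <;> omega
        rw [hemp, measure_empty]
      have h5 := (setLIntegral_eq_zero_iff hSm (hhm i)).mp hint0
      filter_upwards [h5] with x hx hx2
      exact hx hx2
    -- the density Δ (as an ℝ≥0∞-valued function D)
    set D : X → ℝ≥0∞ := fun y => ∑' i, (E i).indicator (fun z => h i (r z)) y with hD
    have hDm : Measurable D :=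
      Measurable.ennreal_tsum fun i => ((hhm i).comp hr).indicator (hEm i)
    have hDτ : ∀ x i, 1 ≤ i → i ≤ c x → D (τ i x) = h i x := by
      intro x i h1 h2
      rw [hD]
      simp only
      rw [tsum_eq_single i ?_]
      · rw [Set.indicator_of_mem (hτE x i h1 h2), hrτ x i h1 h2]
      · intro j hj
        refine Set.indicator_of_notMem (fun hyEj => ?_) _
        obtain ⟨hj1, hj2, hj3⟩ := hmemE j _ hyEj
        rw [hrτ x i h1 h2] at hj2 hj3
        exact hj (hτinj x ⟨hj1, hj2⟩ ⟨h1, h2⟩ hj3)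
    -- fiber sums equal 1 a.e.
    have hfibae : ∀ᵐ x ∂μ₀, ∑ᶠ y ∈ r ⁻¹' {x}, (D y).toReal = 1 := by
      filter_upwards [hG1, ae_all_iff.mpr hzero] with x hx1 hx2
      rw [fibsum]
      have hne : ∀ i ∈ Finset.Icc 1 (c x), h i x ≠ ∞ := fun i _ =>
        ne_top_of_le_ne_top ENNReal.one_ne_top (hx1 ▸ ENNReal.le_tsum i)
      have hsum' : ∑ i ∈ Finset.Icc 1 (c x), h i x = 1 := by
        rw [← hx1]
        exact (tsum_eq_sum fun i hi => hx2 i (by rw [Finset.mem_Icc] at hi; omega)).symm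
      calc ∑ i ∈ Finset.Icc 1 (c x), (D (τ i x)).toReal
          = ∑ i ∈ Finset.Icc 1 (c x), (h i x).toReal := Finset.sum_congr rfl fun i hi => by
            rw [Finset.mem_Icc] at hi; rw [hDτ x i hi.1 hi.2]
        _ = 1 := by rw [← ENNReal.toReal_sum hne, hsum', ENNReal.toReal_one]
    -- measurability of the indicator extension of u ∘ τ i
    have hgind : ∀ (i : ℕ) (u : X → ℝ≥0∞), Measurable u →
        Measurable (({x | i ≤ c x}).indicator fun x => u (τ i x)) := by
      intro i u hu
      apply measurable_of_restrict_of_restrict_compl (hAm i)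
      · have he : ({x | i ≤ c x}).domRestrict (({x | i ≤ c x}).indicator fun x => u (τ i x))
            = fun x : {x | i ≤ c x} => u (({x | i ≤ c x}).restrict (τ i) x) := by
          ext x
          exact Set.indicator_of_mem (f := fun x => u (τ i x)) x.2
        rw [he]
        exact hu.comp (hτmeas i)
      · have he : ({x | i ≤ c x})ᶜ.domRestrict (({x | i ≤ c x}).indicator fun x => u (τ i x))
            = fun _ => 0 := by
          ext x
          exact Set.indicator_of_notMem x.2 _
        rw [he]
        exact measurable_const
    -- main identity for nonnegative bounded f
    have key2 : ∀ f : X → ℝ, Measurable f → (∀ x, 0 ≤ f x) → ∀ Cf : ℝ, (∀ x, f x ≤ Cf) →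
        (∫ x, V x * f x ∂μ₀ = ∫ x, ∑ᶠ y ∈ r ⁻¹' {x}, (D y).toReal * f y ∂μ₀) ∧
        Integrable (fun x => ∑ᶠ y ∈ r ⁻¹' {x}, (D y).toReal * f y) μ₀ := by
      intro f hf hf0 Cf hCf
      set fe : X → ℝ≥0∞ := fun x => ENNReal.ofReal (f x) with hfe
      have hfem : Measurable fe := hf.ennreal_ofReal
      set term : ℕ → X → ℝ≥0∞ := fun i x => if i = 0 then 0 else
        h i x * ({x | i ≤ c x}).indicator (fun x => fe (τ i x)) x with hterm
      have htermm : ∀ i, Measurable (term i) := by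
        intro i
        by_cases h0 : i = 0
        · simp only [hterm, h0, if_pos]
          exact measurable_const
        · simp only [hterm, h0, if_false]
          exact (hhm i).mul (hgind i fe hfem)
      set Φ : X → ℝ≥0∞ := fun x => ∑' i, term i x with hΦ
      have hΦm : Measurable Φ := Measurable.ennreal_tsum htermm
      have hΦint : ∫⁻ x, Φ x ∂μ₀ = ∫⁻ x, Ve x * fe x ∂μ₀ := by
        rw [hΦ]
        simp only
        rw [lintegral_tsum fun i => (htermm i).aemeasurable]
        have h1 : ∀ i, ∫⁻ x, term i x ∂μ₀ = ∫⁻ y in E i, fe y ∂ν := by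
          intro i
          by_cases h0 : i = 0
          · simp [hterm, hE, h0]
          · simp only [hterm, h0, if_false]
            have hwde := lintegral_withDensity_eq_lintegral_mul μ₀ (hhm i) (hgind i fe hfem)
            simp only [Pi.mul_apply] at hwde
            rw [← hwde, hwd i, hβ]
            simp only
            rw [lintegral_map (hgind i fe hfem) hr]
            refine setLIntegral_congr_fun (hEm i) (fun y hy => ?_)
            obtain ⟨h1, h2, h3⟩ := hmemE i y hy
            rw [Set.indicator_of_mem (show r y ∈ {x | i ≤ c x} from h2), h3]
        calc ∑' i, ∫⁻ x, term i x ∂μ₀ = ∑' i, ∫⁻ y in E i, fe y ∂ν := tsum_congr h1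
          _ = ∫⁻ y in ⋃ i, E i, fe y ∂ν := (lintegral_iUnion hEm hEdisj fe).symm
          _ = ∫⁻ y, fe y ∂ν := by rw [hEcover, Measure.restrict_univ]
          _ = ∫⁻ x, Ve x * fe x ∂μ₀ := lintegral_withDensity_eq_lintegral_mul μ₀ hVem hfem
      -- everywhere identity for Φ
      have hΦeq : ∀ x, Φ x = ∑ i ∈ Finset.Icc 1 (c x), h i x * fe (τ i x) := by
        intro x
        rw [hΦ]
        simp only
        rw [tsum_eq_sum (s := Finset.Icc 1 (c x)) ?_]
        · refine Finset.sum_congr rfl fun i hi => ?_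
          rw [Finset.mem_Icc] at hi
          rw [hterm]
          simp only
          rw [if_neg (by omega : ¬ i = 0),
            Set.indicator_of_mem (show x ∈ {x | i ≤ c x} from hi.2)]
        · intro i hi
          rw [Finset.mem_Icc] at hi
          by_cases h0 : i = 0
          · simp [hterm, h0]
          · rw [hterm]
            simp only
            rw [if_neg h0, Set.indicator_of_notMem (by simp only [Set.mem_setOf_eq]; omega),
              mul_zero]
      -- a.e. pointwise identity
      have hptae : ∀ᵐ x ∂μ₀, ENNReal.ofReal (∑ᶠ y ∈ r ⁻¹' {x}, (D y).toReal * f y) = Φ x ∧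
          0 ≤ ∑ᶠ y ∈ r ⁻¹' {x}, (D y).toReal * f y := by
        filter_upwards [hG1] with x hx1
        have hne : ∀ i, h i x ≠ ∞ := fun i =>
          ne_top_of_le_ne_top ENNReal.one_ne_top (hx1 ▸ ENNReal.le_tsum i)
        have e1 : (∑ᶠ y ∈ r ⁻¹' {x}, (D y).toReal * f y)
            = ∑ i ∈ Finset.Icc 1 (c x), (h i x).toReal * f (τ i x) := by
          rw [fibsum]
          refine Finset.sum_congr rfl fun i hi => ?_
          rw [Finset.mem_Icc] at hi
          rw [hDτ x i hi.1 hi.2]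
        refine ⟨?_, ?_⟩
        · rw [e1, ENNReal.ofReal_sum_of_nonneg
            (fun i _ => mul_nonneg ENNReal.toReal_nonneg (hf0 _)), hΦeq x]
          refine Finset.sum_congr rfl fun i hi => ?_
          rw [ENNReal.ofReal_mul ENNReal.toReal_nonneg, ENNReal.ofReal_toReal (hne i)]
        · rw [e1]
          exact Finset.sum_nonneg fun i _ => mul_nonneg ENNReal.toReal_nonneg (hf0 _)
      have haesm : AEStronglyMeasurable (fun x => ∑ᶠ y ∈ r ⁻¹' {x}, (D y).toReal * f y) μ₀ := by
        refine (hΦm.ennreal_toReal.aestronglyMeasurable).congr ?_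
        filter_upwards [hptae] with x hx
        rw [← hx.1, ENNReal.toReal_ofReal hx.2]
      have hfinΦ : ∫⁻ x, Φ x ∂μ₀ ≠ ∞ := by
        rw [hΦint]
        refine ne_of_lt (lt_of_le_of_lt (lintegral_mono fun x =>
          mul_le_mul' (ENNReal.ofReal_le_ofReal (hCv x)) (ENNReal.ofReal_le_ofReal (hCf x))) ?_)
        rw [lintegral_const]
        exact ENNReal.mul_lt_top
          (ENNReal.mul_lt_top ENNReal.ofReal_lt_top ENNReal.ofReal_lt_top) (measure_lt_top _ _)
      have hlintc : ∫⁻ x, ENNReal.ofReal (∑ᶠ y ∈ r ⁻¹' {x}, (D y).toReal * f y) ∂μ₀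
          = ∫⁻ x, Φ x ∂μ₀ := lintegral_congr_ae (by filter_upwards [hptae] with x hx using hx.1)
      refine ⟨?_, ?_⟩
      · rw [integral_eq_lintegral_of_nonneg_ae
          (Filter.Eventually.of_forall fun x => mul_nonneg (hVpos x) (hf0 x))
          (hVm.mul hf).aestronglyMeasurable,
          integral_eq_lintegral_of_nonneg_ae
          (by filter_upwards [hptae] with x hx using hx.2) haesm]
        congr 1
        rw [hlintc, hΦint]
        refine lintegral_congr fun x => ?_
        rw [ENNReal.ofReal_mul (hVpos x)]
      · refine ⟨haesm, ?_⟩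
        rw [hasFiniteIntegral_def]
        have : ∫⁻ x, ‖∑ᶠ y ∈ r ⁻¹' {x}, (D y).toReal * f y‖ₑ ∂μ₀ = ∫⁻ x, Φ x ∂μ₀ := by
          refine lintegral_congr_ae ?_
          filter_upwards [hptae] with x hx
          rw [← hx.1, Real.enorm_eq_ofReal hx.2]
        rw [this]
        exact lt_of_le_of_ne le_top hfinΦ
    -- conclude
    refine ⟨fun y => (D y).toReal, hDm.ennreal_toReal, fun _ => ENNReal.toReal_nonneg,
      hfibae, ?_⟩
    rintro f hf ⟨Cf, hCf⟩
    set C' : ℝ := |Cf| with hC'def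
    have hC' : ∀ x, |f x| ≤ C' := fun x => (hCf x).trans (le_abs_self _)
    have hC'0 : 0 ≤ C' := abs_nonneg _
    set g : X → ℝ := fun x => f x + C' with hg
    have hg0 : ∀ x, 0 ≤ g x := fun x => by
      have := (abs_le.mp (hC' x)).1
      simp only [hg]
      linarith
    have hgC : ∀ x, g x ≤ 2 * C' := fun x => by
      have := (abs_le.mp (hC' x)).2
      simp only [hg]
      linarith
    obtain ⟨keyg, hIntg⟩ := key2 g (hf.add measurable_const) hg0 _ hgC
    obtain ⟨keyc, hIntc⟩ := key2 (fun _ => C') measurable_const (fun _ => hC'0) C'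
      (fun _ => le_refl _)
    have hIntVg : Integrable (fun x => V x * g x) μ₀ := by
      refine (integrable_const (|Cv| * (2 * C'))).mono'
        ((hVm.mul (hf.add measurable_const)).aestronglyMeasurable) ?_
      refine Filter.Eventually.of_forall fun x => ?_
      have h1 : |V x| ≤ |Cv| := by
        rw [abs_of_nonneg (hVpos x)]
        exact (hCv x).trans (le_abs_self _)
      have h2 : |g x| ≤ 2 * C' := by
        rw [abs_of_nonneg (hg0 x)]
        exact hgC x
      calc ‖V x * g x‖ = |V x| * |g x| := abs_mul _ _
        _ ≤ |Cv| * (2 * C') := mul_le_mul h1 h2 (abs_nonneg _) (abs_nonneg _)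
    have hIntVC : Integrable (fun x => V x * C') μ₀ := by
      refine (integrable_const (|Cv| * C')).mono' ((hVm.mul measurable_const).aestronglyMeasurable) ?_
      refine Filter.Eventually.of_forall fun x => ?_
      have h1 : |V x| ≤ |Cv| := by
        rw [abs_of_nonneg (hVpos x)]
        exact (hCv x).trans (le_abs_self _)
      calc ‖V x * C'‖ = |V x| * |C'| := abs_mul _ _
        _ ≤ |Cv| * C' := by rw [abs_of_nonneg hC'0]; exact mul_le_mul_of_nonneg_right h1 hC'0
    calc ∫ x, V x * f x ∂μ₀
        = ∫ x, (V x * g x - V x * C') ∂μ₀ := by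
          refine integral_congr_ae (Filter.Eventually.of_forall fun x => ?_)
          simp only [hg]
          ring
      _ = (∫ x, V x * g x ∂μ₀) - ∫ x, V x * C' ∂μ₀ := integral_sub hIntVg hIntVC
      _ = (∫ x, ∑ᶠ y ∈ r ⁻¹' {x}, (D y).toReal * g y ∂μ₀)
          - ∫ x, ∑ᶠ y ∈ r ⁻¹' {x}, (D y).toReal * C' ∂μ₀ := by rw [keyg, keyc]
      _ = ∫ x, ((∑ᶠ y ∈ r ⁻¹' {x}, (D y).toReal * g y)
          - ∑ᶠ y ∈ r ⁻¹' {x}, (D y).toReal * C') ∂μ₀ := (integral_sub hIntg hIntc).symm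
      _ = ∫ x, ∑ᶠ y ∈ r ⁻¹' {x}, (D y).toReal * f y ∂μ₀ := by
          have hpt : ∀ x : X, ((∑ᶠ y ∈ r ⁻¹' {x}, (D y).toReal * g y)
              - ∑ᶠ y ∈ r ⁻¹' {x}, (D y).toReal * C')
              = ∑ᶠ y ∈ r ⁻¹' {x}, (D y).toReal * f y := by
            intro x
            rw [fibsum, fibsum, fibsum, ← Finset.sum_sub_distrib]
            refine Finset.sum_congr rfl fun i _ => ?_
            simp only [hg]
            ring
          exact integral_congr_ae (Filter.Eventually.of_forall fun x => hpt x)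
  · rintro ⟨Δ, hΔm, hΔpos, hΔsum, hΔint⟩ f hf hfb
    obtain ⟨C, hC⟩ := hfb
    have h1 := hΔint (fun y => f (r y)) (hf.comp hr) ⟨C, fun x => hC (r x)⟩
    rw [h1]
    refine integral_congr_ae ?_
    filter_upwards [hΔsum] with x hx
    rw [fibsum]
    have heq : ∀ i ∈ Finset.Icc 1 (c x), Δ (τ i x) * f (r (τ i x)) = Δ (τ i x) * f x := by
      intro i hi
      rw [Finset.mem_Icc] at hi
      rw [hrτ x i hi.1 hi.2]
    rw [Finset.sum_congr rfl heq, ← Finset.sum_mul, ← fibsum, hx, one_mul]
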